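/- The group presented by four generators a, b, f, h subject to the single relation abf = bfab (equivalently, the relator (bf)⁻¹a⁻¹(bf)ab) is isomorphic to the free group of rank 3. -/

import Mathlib

/-- The letters `a`, `b`, `f`, `h` of the presentation `⟨a, b, f, h | abf = bfab⟩`. -/
abbrev wA : FreeGroup (Fin 4) := FreeGroup.of 0
abbrev wB : FreeGroup (Fin 4) := FreeGroup.of 1
abbrev wF : FreeGroup (Fin 4) := FreeGroup.of 2
abbrev wH : FreeGroup (Fin 4) := FreeGroup.of 3

namespace Stmt19Aux

abbrev rels : Set (FreeGroup (Fin 4)) := {wF⁻¹ * wB⁻¹ * wA⁻¹ * wB * wF * wA * wB}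

noncomputable abbrev x0 : FreeGroup (Fin 3) := FreeGroup.of 0
noncomputable abbrev x1 : FreeGroup (Fin 3) := FreeGroup.of 1
noncomputable abbrev x2 : FreeGroup (Fin 3) := FreeGroup.of 2

noncomputable def g : Fin 4 → FreeGroup (Fin 3) :=
  ![x0, x0⁻¹ * x1⁻¹ * x0 * x1, x1⁻¹ * x0⁻¹ * x1 * x0 * x1, x2]

lemma hrel : ∀ r ∈ rels, FreeGroup.lift g r = 1 := by
  intro r hr
  rcases hr with rfl
  simp only [map_mul, map_inv, FreeGroup.lift_apply_of, g]
  show (![x0, x0⁻¹ * x1⁻¹ * x0 * x1, x1⁻¹ * x0⁻¹ * x1 * x0 * x1, x2] (2:Fin 4))⁻¹ *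
    (![x0, x0⁻¹ * x1⁻¹ * x0 * x1, x1⁻¹ * x0⁻¹ * x1 * x0 * x1, x2] (1:Fin 4))⁻¹ * _ * _ * _ * _ * _ = 1
  simp only [Matrix.cons_val_zero, Matrix.cons_val_one, Matrix.head_cons, Matrix.cons_val_two,
    Matrix.tail_cons, Matrix.cons_val_three]
  group

noncomputable def φ : PresentedGroup rels →* FreeGroup (Fin 3) := PresentedGroup.toGroup hrel

noncomputable def k : Fin 3 → PresentedGroup rels :=
  ![PresentedGroup.of 0, PresentedGroup.of 1 * PresentedGroup.of 2, PresentedGroup.of 3]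

noncomputable def ψ : FreeGroup (Fin 3) →* PresentedGroup rels := FreeGroup.lift k

lemma rel_holds : ((PresentedGroup.of 2 : PresentedGroup rels))⁻¹ * (PresentedGroup.of 1)⁻¹ *
    (PresentedGroup.of 0)⁻¹ * PresentedGroup.of 1 * PresentedGroup.of 2 * PresentedGroup.of 0 *
    PresentedGroup.of 1 = 1 := by
  have : ((QuotientGroup.mk (wF⁻¹ * wB⁻¹ * wA⁻¹ * wB * wF * wA * wB) : PresentedGroup rels)) = 1 := by
    rw [QuotientGroup.eq_one_iff]
    exact Subgroup.subset_normalClosure rfl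
  change PresentedGroup.mk rels (wF⁻¹ * wB⁻¹ * wA⁻¹ * wB * wF * wA * wB) = 1 at this
  simp only [map_mul, map_inv] at this
  exact this

end Stmt19Aux

open Stmt19Aux in
/-- The group `⟨a, b, f, h | abf = bfab⟩` (with relator `f⁻¹b⁻¹a⁻¹bfab`) is isomorphic
to the free group of rank 3. -/
theorem stmt_19 :
    Nonempty (PresentedGroup ({wF⁻¹ * wB⁻¹ * wA⁻¹ * wB * wF * wA * wB} : Set (FreeGroup (Fin 4)))
      ≃* FreeGroup (Fin 3)) := by
  set A := PresentedGroup.of (rels := rels) 0 with hA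
  set B := PresentedGroup.of (rels := rels) 1 with hB
  set F := PresentedGroup.of (rels := rels) 2 with hF
  have key : F⁻¹ * B⁻¹ * A⁻¹ * B * F * A * B = 1 := rel_holds
  have hBval : B = A⁻¹ * (B*F)⁻¹ * A * (B*F) := by
    have := key
    group at this ⊢
    -- derive from key
    rw [eq_comm]
    calc A⁻¹ * (B*F)⁻¹ * A * (B*F)
        = A⁻¹ * F⁻¹ * B⁻¹ * A * B * F := by group
      _ = B := by
          have h2 : F⁻¹ * B⁻¹ * A⁻¹ * B * F * A = B⁻¹ := by
            have := key
            calc F⁻¹ * B⁻¹ * A⁻¹ * B * F * A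
                = (F⁻¹ * B⁻¹ * A⁻¹ * B * F * A * B) * B⁻¹ := by group
              _ = B⁻¹ := by rw [key]; group
          have h3 : A⁻¹ * B * F * A = B * F * B⁻¹ := by
            calc A⁻¹ * B * F * A = B * F * (F⁻¹ * B⁻¹ * A⁻¹ * B * F * A) := by group
              _ = B * F * B⁻¹ := by rw [h2]
          calc A⁻¹ * F⁻¹ * B⁻¹ * A * B * F
              = (A⁻¹ * B * F * A)⁻¹ * B * F := by group
            _ = (B * F * B⁻¹)⁻¹ * B * F := by rw [h3]
            _ = B := by group
  have comp1 : ψ.comp φ = MonoidHom.id _ := by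
    apply PresentedGroup.ext
    intro x
    fin_cases x <;>
      simp only [MonoidHom.comp_apply, MonoidHom.id_apply, φ, PresentedGroup.toGroup.of, g, ψ,
        Matrix.cons_val_zero, Matrix.cons_val_one, Matrix.head_cons, Matrix.cons_val_two,
        Matrix.tail_cons, Matrix.cons_val_three, map_mul, map_inv, FreeGroup.lift_apply_of, k]
    · rfl
    · -- B case: A⁻¹ * (B*F)⁻¹ * A * (B*F) = B
      show (k 0)⁻¹ * (k 1)⁻¹ * k 0 * k 1 = PresentedGroup.of 1
      simp only [k, Matrix.cons_val_zero, Matrix.cons_val_one, Matrix.head_cons]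
      rw [← hA, ← hB, ← hF]
      conv_rhs => rw [hBval]
    · show (k 1)⁻¹ * (k 0)⁻¹ * k 1 * k 0 * k 1 = PresentedGroup.of 2
      simp only [k, Matrix.cons_val_zero, Matrix.cons_val_one, Matrix.head_cons]
      rw [← hA, ← hB, ← hF]
      have : (B*F)⁻¹ * A⁻¹ * (B*F) * A * (B*F) = (A⁻¹ * (B*F)⁻¹ * A * (B*F))⁻¹ * (B * F) := by
        group
      rw [this, ← hBval]; group
    · rfl
  have hφ : ∀ i : Fin 4, φ (PresentedGroup.of i) = g i := fun i => PresentedGroup.toGroup.of hrel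
  have comp2 : φ.comp ψ = MonoidHom.id _ := by
    apply FreeGroup.ext_hom
    intro x
    simp only [MonoidHom.comp_apply, MonoidHom.id_apply, ψ, FreeGroup.lift_apply_of]
    fin_cases x
    · show φ (k 0) = FreeGroup.of 0
      simp only [k, Matrix.cons_val_zero]
      rw [hφ]; rfl
    · show φ (k 1) = FreeGroup.of 1
      simp only [k, Matrix.cons_val_one, Matrix.head_cons, Matrix.cons_val_zero, map_mul]
      rw [hφ, hφ]
      show (x0⁻¹ * x1⁻¹ * x0 * x1) * (x1⁻¹ * x0⁻¹ * x1 * x0 * x1) = x1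
      group
    · show φ (k 2) = FreeGroup.of 2
      simp only [k, Matrix.cons_val_two, Matrix.tail_cons, Matrix.head_cons]
      rw [hφ]; rfl
  exact ⟨MonoidHom.toMulEquiv φ ψ (by exact comp1) comp2⟩
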